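/- Let σ be a map assigning to each pair x < y in P an element σ(x,y) ∈ R which is constant on chains. Then the map B : D × D → I(P,R) defined by B(f,g)(x,x) = 0 for all x ∈ P and B(f,g)(x,y) = σ(x,y)·[f,g](x,y) for all x < y is an R-bilinear antisymmetric biderivation of D with values in I(P,R). -/

import Mathlib

/-- The element `e_{xy}` of the incidence algebra: value `1` at `(x, y)` and `0` elsewhere. -/
def esingle (R : Type*) {P : Type*} [CommRing R] [PartialOrder P] [DecidableEq P]
    {x y : P} (_h : x ≤ y) : IncidenceAlgebra R P :=
  ⟨fun u v => if u = x ∧ v = y then 1 else 0, fun u v huv => by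
    try dsimp only
    split_ifs with h'
    · obtain ⟨rfl, rfl⟩ := h'
      exact absurd _h huv
    · rfl⟩

/-- `D`: the `R`-span of the elements `e_{xy}`, `x ≤ y`, i.e. the finitely supported elements of
the incidence algebra. -/
def Dspan (R P : Type*) [CommRing R] [PartialOrder P] [DecidableEq P] :
    Submodule R (IncidenceAlgebra R P) :=
  Submodule.span R {f : IncidenceAlgebra R P | ∃ (x y : P) (h : x ≤ y), f = esingle R h}

section Aux

open Finset IncidenceAlgebra

variable {R P : Type*} [CommRing R] [PartialOrder P] [LocallyFiniteOrder P] [DecidableEq P]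

lemma esingle_apply {x y : P} (h : x ≤ y) (a b : P) :
    esingle R h a b = if a = x ∧ b = y then 1 else 0 := rfl

lemma esingle_mul_mem {x y u v : P} (h1 : x ≤ y) (h2 : u ≤ v) :
    esingle R h1 * esingle R h2 ∈ Dspan R P := by
  by_cases hyu : y = u
  · subst hyu
    have : esingle R h1 * esingle R h2 = esingle R (h1.trans h2) := by
      apply IncidenceAlgebra.ext
      intro a b hab
      simp only [mul_apply, esingle_apply]
      by_cases hax : a = x <;> by_cases hbv : b = v <;>
        simp [hax, hbv, Finset.mem_Icc, h1, h2, ite_and]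
    rw [this]
    exact Submodule.subset_span ⟨x, v, h1.trans h2, rfl⟩
  · have : esingle R h1 * esingle R h2 = 0 := by
      apply IncidenceAlgebra.ext
      intro a b hab
      simp only [mul_apply, esingle_apply, IncidenceAlgebra.zero_apply]
      apply Finset.sum_eq_zero
      intro z hz
      by_cases hzy : z = y <;> by_cases hzu : z = u <;> simp_all
    rw [this]
    exact zero_mem _

lemma mul_mem_Dspan {f g : IncidenceAlgebra R P} (hf : f ∈ Dspan R P) (hg : g ∈ Dspan R P) :
    f * g ∈ Dspan R P := by
  have hle : Dspan R P * Dspan R P ≤ Dspan R P := by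
    rw [Dspan, Submodule.span_mul_span]
    refine Submodule.span_le.2 ?_
    rintro p hp
    rw [Set.mem_mul] at hp
    obtain ⟨a, ⟨x, y, h1, rfl⟩, b, ⟨u, v, h2, rfl⟩, rfl⟩ := hp
    exact esingle_mul_mem h1 h2
  exact hle (Submodule.mul_mem_mul hf hg)

lemma chain4 {x z y : P} (h1 : x ≤ z) (h2 : z ≤ y) :
    IsChain (· ≤ ·) ({x, z, x, y} : Set P) := by
  intro a ha b hb hab
  simp only [Set.mem_insert_iff, Set.mem_singleton_iff] at ha hb
  rcases ha with rfl | rfl | rfl | rfl <;> rcases hb with rfl | rfl | rfl | rfl <;>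
    first
      | exact (hab rfl).elim
      | exact Or.inl h1
      | exact Or.inr h1
      | exact Or.inl h2
      | exact Or.inr h2
      | exact Or.inl (h1.trans h2)
      | exact Or.inr (h1.trans h2)

lemma chain4' {x z y : P} (h1 : x ≤ z) (h2 : z ≤ y) :
    IsChain (· ≤ ·) ({z, y, x, y} : Set P) := by
  intro a ha b hb hab
  simp only [Set.mem_insert_iff, Set.mem_singleton_iff] at ha hb
  rcases ha with rfl | rfl | rfl | rfl <;> rcases hb with rfl | rfl | rfl | rfl <;>
    first
      | exact (hab rfl).elim
      | exact Or.inl h1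
      | exact Or.inr h1
      | exact Or.inl h2
      | exact Or.inr h2
      | exact Or.inl (h1.trans h2)
      | exact Or.inr (h1.trans h2)

end Aux

/-- If `σ : P²_< → R` is constant on chains, then the map `B` defined by
`B(f,g)(x,x) = 0` and `B(f,g)(x,y) = σ(x,y)[f,g](x,y)` for `x < y` is an `R`-bilinear
antisymmetric biderivation of `D` with values in `I(P,R)`. -/
theorem sigma_commutator_is_bider_of_D
    {R P : Type*} [CommRing R] [PartialOrder P] [LocallyFiniteOrder P] [DecidableEq P]
    (σ : P → P → R)
    (hσ : ∀ x y u v : P, x < y → u < v → IsChain (· ≤ ·) ({x, y, u, v} : Set P) →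
      σ x y = σ u v)
    (B : IncidenceAlgebra R P → IncidenceAlgebra R P → IncidenceAlgebra R P)
    (hB_diag : ∀ f g, f ∈ Dspan R P → g ∈ Dspan R P → ∀ x : P, B f g x x = 0)
    (hB_lt : ∀ f g, f ∈ Dspan R P → g ∈ Dspan R P →
      ∀ x y : P, x < y → B f g x y = σ x y * (f * g - g * f) x y) :
    (∀ f g h, f ∈ Dspan R P → g ∈ Dspan R P → h ∈ Dspan R P →
      B (f + g) h = B f h + B g h) ∧
    (∀ f g h, f ∈ Dspan R P → g ∈ Dspan R P → h ∈ Dspan R P →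
      B f (g + h) = B f g + B f h) ∧
    (∀ (r : R) (f h), f ∈ Dspan R P → h ∈ Dspan R P → B (r • f) h = r • B f h) ∧
    (∀ (r : R) (f h), f ∈ Dspan R P → h ∈ Dspan R P → B f (r • h) = r • B f h) ∧
    (∀ f g h, f ∈ Dspan R P → g ∈ Dspan R P → h ∈ Dspan R P →
      B (f * g) h = B f h * g + f * B g h) ∧
    (∀ f g h, f ∈ Dspan R P → g ∈ Dspan R P → h ∈ Dspan R P →
      B f (g * h) = B f g * h + g * B f h) ∧
    (∀ f, f ∈ Dspan R P → B f f = 0) := by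
  classical
  -- diagonal of a commutator vanishes
  have hcomm_diag : ∀ (f g : IncidenceAlgebra R P) (a : P), (f * g - g * f) a a = 0 := by
    intro f g a
    simp [IncidenceAlgebra.sub_apply, IncidenceAlgebra.mul_apply, Finset.Icc_self, mul_comm]
  -- sums with B on the left
  have key1 : ∀ (f h g : IncidenceAlgebra R P), f ∈ Dspan R P → h ∈ Dspan R P →
      ∀ a b : P, a < b →
      ∑ z ∈ Finset.Icc a b, B f h a z * g z b
        = σ a b * ∑ z ∈ Finset.Icc a b, (f * h - h * f) a z * g z b := by
    intro f h g hf hh a b hab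
    rw [Finset.mul_sum]
    refine Finset.sum_congr rfl ?_
    intro z hz
    rw [Finset.mem_Icc] at hz
    rcases eq_or_lt_of_le hz.1 with rfl | haz
    · rw [hB_diag f h hf hh, hcomm_diag]
      ring
    · rw [hB_lt f h hf hh a z haz, hσ a z a b haz hab (chain4 haz.le hz.2), mul_assoc]
  -- sums with B on the right
  have key2 : ∀ (f h g : IncidenceAlgebra R P), f ∈ Dspan R P → h ∈ Dspan R P →
      ∀ a b : P, a < b →
      ∑ z ∈ Finset.Icc a b, g a z * B f h z b
        = σ a b * ∑ z ∈ Finset.Icc a b, g a z * (f * h - h * f) z b := by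
    intro f h g hf hh a b hab
    rw [Finset.mul_sum]
    refine Finset.sum_congr rfl ?_
    intro z hz
    rw [Finset.mem_Icc] at hz
    rcases eq_or_lt_of_le hz.2 with rfl | hzb
    · rw [hB_diag f h hf hh, hcomm_diag]
      ring
    · rw [hB_lt f h hf hh z b hzb, hσ z b a b hzb hab (chain4' hz.1 hzb.le)]
      ring
  refine ⟨?_, ?_, ?_, ?_, ?_, ?_, ?_⟩
  · -- additivity left
    intro f g h hf hg hh
    apply IncidenceAlgebra.ext
    intro a b hab
    rcases eq_or_lt_of_le hab with rfl | hlt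
    · rw [IncidenceAlgebra.add_apply, hB_diag _ _ (add_mem hf hg) hh,
        hB_diag _ _ hf hh, hB_diag _ _ hg hh, add_zero]
    · rw [IncidenceAlgebra.add_apply, hB_lt _ _ (add_mem hf hg) hh _ _ hlt,
        hB_lt _ _ hf hh _ _ hlt, hB_lt _ _ hg hh _ _ hlt]
      have : (f + g) * h - h * (f + g) = (f * h - h * f) + (g * h - h * g) := by noncomm_ring
      rw [this, IncidenceAlgebra.add_apply, mul_add]
  · -- additivity right
    intro f g h hf hg hh
    apply IncidenceAlgebra.ext
    intro a b hab
    rcases eq_or_lt_of_le hab with rfl | hlt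
    · rw [IncidenceAlgebra.add_apply, hB_diag _ _ hf (add_mem hg hh),
        hB_diag _ _ hf hg, hB_diag _ _ hf hh, add_zero]
    · rw [IncidenceAlgebra.add_apply, hB_lt _ _ hf (add_mem hg hh) _ _ hlt,
        hB_lt _ _ hf hg _ _ hlt, hB_lt _ _ hf hh _ _ hlt]
      have : f * (g + h) - (g + h) * f = (f * g - g * f) + (f * h - h * f) := by noncomm_ring
      rw [this, IncidenceAlgebra.add_apply, mul_add]
  · -- smul left
    intro r f h hf hh
    apply IncidenceAlgebra.ext
    intro a b hab
    rcases eq_or_lt_of_le hab with rfl | hlt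
    · rw [IncidenceAlgebra.constSMul_apply, hB_diag _ _ (Submodule.smul_mem _ r hf) hh,
        hB_diag _ _ hf hh, smul_zero]
    · rw [IncidenceAlgebra.constSMul_apply, hB_lt _ _ (Submodule.smul_mem _ r hf) hh _ _ hlt,
        hB_lt _ _ hf hh _ _ hlt]
      have : (r • f) * h - h * (r • f) = r • (f * h - h * f) := by
        rw [smul_mul_assoc, mul_smul_comm, smul_sub]
      rw [this, IncidenceAlgebra.constSMul_apply, smul_eq_mul, smul_eq_mul]
      ring
  · -- smul right
    intro r f h hf hh
    apply IncidenceAlgebra.ext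
    intro a b hab
    rcases eq_or_lt_of_le hab with rfl | hlt
    · rw [IncidenceAlgebra.constSMul_apply, hB_diag _ _ hf (Submodule.smul_mem _ r hh),
        hB_diag _ _ hf hh, smul_zero]
    · rw [IncidenceAlgebra.constSMul_apply, hB_lt _ _ hf (Submodule.smul_mem _ r hh) _ _ hlt,
        hB_lt _ _ hf hh _ _ hlt]
      have : f * (r • h) - (r • h) * f = r • (f * h - h * f) := by
        rw [smul_mul_assoc, mul_smul_comm, smul_sub]
      rw [this, IncidenceAlgebra.constSMul_apply, smul_eq_mul, smul_eq_mul]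
      ring
  · -- Leibniz left
    intro f g h hf hg hh
    apply IncidenceAlgebra.ext
    intro a b hab
    rcases eq_or_lt_of_le hab with rfl | hlt
    · rw [IncidenceAlgebra.add_apply, hB_diag _ _ (mul_mem_Dspan hf hg) hh,
        IncidenceAlgebra.mul_apply, IncidenceAlgebra.mul_apply, Finset.Icc_self,
        Finset.sum_singleton, Finset.sum_singleton, hB_diag _ _ hf hh,
        hB_diag _ _ hg hh, zero_mul, mul_zero, add_zero]
    · rw [IncidenceAlgebra.add_apply, hB_lt _ _ (mul_mem_Dspan hf hg) hh _ _ hlt,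
        IncidenceAlgebra.mul_apply, IncidenceAlgebra.mul_apply,
        key1 f h g hf hh a b hlt, key2 g h f hg hh a b hlt, ← mul_add]
      congr 1
      rw [← IncidenceAlgebra.mul_apply, ← IncidenceAlgebra.mul_apply,
        ← IncidenceAlgebra.add_apply]
      congr 1
      noncomm_ring
  · -- Leibniz right
    intro f g h hf hg hh
    apply IncidenceAlgebra.ext
    intro a b hab
    rcases eq_or_lt_of_le hab with rfl | hlt
    · rw [IncidenceAlgebra.add_apply, hB_diag _ _ hf (mul_mem_Dspan hg hh),
        IncidenceAlgebra.mul_apply, IncidenceAlgebra.mul_apply, Finset.Icc_self,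
        Finset.sum_singleton, Finset.sum_singleton, hB_diag _ _ hf hg,
        hB_diag _ _ hf hh, zero_mul, mul_zero, add_zero]
    · rw [IncidenceAlgebra.add_apply, hB_lt _ _ hf (mul_mem_Dspan hg hh) _ _ hlt,
        IncidenceAlgebra.mul_apply, IncidenceAlgebra.mul_apply,
        key1 f g h hf hg a b hlt, key2 f h g hf hh a b hlt, ← mul_add]
      congr 1
      rw [← IncidenceAlgebra.mul_apply, ← IncidenceAlgebra.mul_apply,
        ← IncidenceAlgebra.add_apply]
      congr 1
      noncomm_ring
  · -- antisymmetry
    intro f hf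
    apply IncidenceAlgebra.ext
    intro a b hab
    rcases eq_or_lt_of_le hab with rfl | hlt
    · rw [hB_diag _ _ hf hf, IncidenceAlgebra.zero_apply]
    · rw [hB_lt _ _ hf hf _ _ hlt]
      simp
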